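/- Fix x ∈ ℝ^n and set g = Aᵀ(Ax − b) + λ²Dᵀ(Dx + c − Z(x)). If g ≠ 0, then −g is a descent direction for f_proj at x: there exists ᾱ > 0 such that f_proj(x − αg) < f_proj(x) for all α ∈ (0, ᾱ). -/
import Mathlib
open Matrix BigOperators

noncomputable def fjoint {m n l : ℕ} (A : Matrix (Fin m) (Fin n) ℝ) (b : Fin m → ℝ)
    (D : Matrix (Fin l) (Fin n) ℝ) (c : Fin l → ℝ) (μ lam : ℝ)
    (x : Fin n → ℝ) (y : Fin l → ℝ) : ℝ :=
  (1/2) * ∑ i, (A.mulVec x i - b i)^2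
    + (lam^2/2) * ∑ i, (D.mulVec x i - y i + c i)^2
    + μ * ∑ i, |y i|

noncomputable def shrinkZ {n l : ℕ} (D : Matrix (Fin l) (Fin n) ℝ) (c : Fin l → ℝ)
    (μ lam : ℝ) (x : Fin n → ℝ) : Fin l → ℝ :=
  fun i => Real.sign (D.mulVec x i + c i) * max (|D.mulVec x i + c i| - μ / lam^2) 0

noncomputable def fproj {m n l : ℕ} (A : Matrix (Fin m) (Fin n) ℝ) (b : Fin m → ℝ)
    (D : Matrix (Fin l) (Fin n) ℝ) (c : Fin l → ℝ) (μ lam : ℝ)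
    (x : Fin n → ℝ) : ℝ :=
  fjoint A b D c μ lam x (shrinkZ D c μ lam x)

lemma shrink_facts (a κ t : ℝ) (ha : 0 < a) (hκ : 0 < κ) :
    a * (t - Real.sign t * max (|t| - κ/a) 0) * (Real.sign t * max (|t| - κ/a) 0)
      = κ * |Real.sign t * max (|t| - κ/a) 0|
    ∧ |a * (t - Real.sign t * max (|t| - κ/a) 0)| ≤ κ := by
  have hka : 0 < κ / a := div_pos hκ ha
  rcases lt_trichotomy t 0 with ht | ht | ht
  · rw [Real.sign_of_neg ht, abs_of_neg ht]
    by_cases h : -t - κ/a ≤ 0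
    · rw [max_eq_right h]
      constructor
      · simp
      · have h1 : a * (-t) ≤ κ := by
          rw [← le_div_iff₀' ha]; linarith
        rw [mul_zero, sub_zero, abs_mul, abs_of_pos ha, abs_of_neg ht]
        linarith
    · push_neg at h
      rw [max_eq_left (le_of_lt h)]
      have hs : t + κ/a < 0 := by linarith
      constructor
      · have : t - (-1) * (-t - κ/a) = -(κ/a) := by ring
        rw [this]
        have h2 : a * -(κ/a) = -κ := by field_simp; try ring
        have h3 : (-1 : ℝ) * (-t - κ/a) = t + κ/a := by ring
        rw [h2, h3, abs_of_neg hs]; ring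
      · have : t - (-1) * (-t - κ/a) = -(κ/a) := by ring
        rw [this]
        have h2 : a * -(κ/a) = -κ := by field_simp; try ring
        rw [h2, abs_neg, abs_of_pos hκ]
  · subst ht
    simp [Real.sign_zero, abs_of_pos hκ, le_of_lt hκ]
  · rw [Real.sign_of_pos ht, abs_of_pos ht]
    by_cases h : t - κ/a ≤ 0
    · rw [max_eq_right h]
      constructor
      · simp
      · have h1 : a * t ≤ κ := by
          rw [← le_div_iff₀' ha]; linarith
        rw [mul_zero, sub_zero, abs_mul, abs_of_pos ha, abs_of_pos ht]
        linarith
    · push_neg at h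
      rw [max_eq_left (le_of_lt h)]
      have hs : 0 < t - κ/a := by linarith
      constructor
      · have : t - 1 * (t - κ/a) = κ/a := by ring
        rw [this]
        have h2 : a * (κ/a) = κ := by field_simp
        have h3 : (1 : ℝ) * (t - κ/a) = t - κ/a := by ring
        rw [h2, h3, abs_of_pos hs]
      · have : t - 1 * (t - κ/a) = κ/a := by ring
        rw [this]
        have h2 : a * (κ/a) = κ := by field_simp
        rw [h2, abs_of_pos hκ]

lemma soft_le (a κ t y : ℝ) (ha : 0 < a) (hκ : 0 < κ) :
    a/2 * (t - Real.sign t * max (|t| - κ/a) 0)^2 + κ * |Real.sign t * max (|t| - κ/a) 0|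
      ≤ a/2 * (t - y)^2 + κ * |y| := by
  obtain ⟨k1, k2⟩ := shrink_facts a κ t ha hκ
  set s := Real.sign t * max (|t| - κ/a) 0 with hs
  have h3 : a * (t - s) * y ≤ κ * |y| := by
    calc a * (t - s) * y ≤ |a * (t - s) * y| := le_abs_self _
    _ = |a * (t - s)| * |y| := abs_mul _ _
    _ ≤ κ * |y| := mul_le_mul_of_nonneg_right k2 (abs_nonneg y)
  nlinarith [sq_nonneg (y - s), ha.le]

lemma fproj_le_fjoint {m n l : ℕ} (A : Matrix (Fin m) (Fin n) ℝ) (b : Fin m → ℝ)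
    (D : Matrix (Fin l) (Fin n) ℝ) (c : Fin l → ℝ) (μ lam : ℝ)
    (hμ : 0 < μ) (hlam : 0 < lam) (z : Fin n → ℝ) (y : Fin l → ℝ) :
    fproj A b D c μ lam z ≤ fjoint A b D c μ lam z y := by
  have ha : (0:ℝ) < lam^2 := by positivity
  have key : (lam^2/2) * ∑ i, (D.mulVec z i - shrinkZ D c μ lam z i + c i)^2
        + μ * ∑ i, |shrinkZ D c μ lam z i|
      ≤ (lam^2/2) * ∑ i, (D.mulVec z i - y i + c i)^2 + μ * ∑ i, |y i| := by
    rw [Finset.mul_sum, Finset.mul_sum, Finset.mul_sum, Finset.mul_sum,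
      ← Finset.sum_add_distrib, ← Finset.sum_add_distrib]
    apply Finset.sum_le_sum
    intro i _
    have h := soft_le (lam^2) μ (D.mulVec z i + c i) (y i) ha hμ
    have e1 : D.mulVec z i - shrinkZ D c μ lam z i + c i
        = D.mulVec z i + c i - Real.sign (D.mulVec z i + c i)
            * max (|D.mulVec z i + c i| - μ/lam^2) 0 := by
      simp [shrinkZ]; ring
    have e2 : D.mulVec z i - y i + c i = D.mulVec z i + c i - y i := by ring
    rw [e1, e2]
    simpa [shrinkZ, e1] using h
  unfold fproj fjoint
  linarith

theorem stmt11 {m n l : ℕ} (A : Matrix (Fin m) (Fin n) ℝ) (b : Fin m → ℝ)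
    (D : Matrix (Fin l) (Fin n) ℝ) (c : Fin l → ℝ) (μ lam : ℝ)
    (hμ : 0 < μ) (hlam : 0 < lam) (x : Fin n → ℝ)
    (g : Fin n → ℝ)
    (hg : g = Aᵀ.mulVec (A.mulVec x - b)
        + lam^2 • Dᵀ.mulVec (D.mulVec x + c - shrinkZ D c μ lam x))
    (hg0 : g ≠ 0) :
    ∃ abar > (0:ℝ), ∀ α : ℝ, 0 < α → α < abar →
      fproj A b D c μ lam (x - α • g) < fproj A b D c μ lam x := by
  set s := shrinkZ D c μ lam x with hsdef
  set u : Fin m → ℝ := fun i => A.mulVec x i - b i with hu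
  set p : Fin m → ℝ := A.mulVec g with hp
  set v : Fin l → ℝ := fun i => D.mulVec x i + c i - s i with hv
  set q : Fin l → ℝ := D.mulVec g with hq
  set G : ℝ := ∑ i, g i * g i with hG
  set C : ℝ := (∑ i, p i ^ 2) + lam^2 * ∑ i, q i ^ 2 with hC
  -- S = G
  have hS : (∑ i, u i * p i) + lam^2 * ∑ i, v i * q i = G := by
    have h1 : G = g ⬝ᵥ g := rfl
    rw [h1]
    nth_rewrite 1 [hg]
    rw [add_dotProduct, smul_dotProduct, smul_eq_mul,
      mulVec_transpose, mulVec_transpose, ← dotProduct_mulVec, ← dotProduct_mulVec]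
    simp only [dotProduct, Pi.sub_apply, Pi.add_apply, hu, hv, hp, hq]
  have hexp : ∀ α : ℝ, fjoint A b D c μ lam (x - α • g) s
      = fproj A b D c μ lam x - α * G + α^2/2 * C := by
    intro α
    have hAz : ∀ i, A.mulVec (x - α • g) i - b i = u i - α * p i := by
      intro i
      rw [mulVec_sub, mulVec_smul]
      simp [hu, hp]
      ring
    have hDz : ∀ i, D.mulVec (x - α • g) i - s i + c i = v i - α * q i := by
      intro i
      rw [mulVec_sub, mulVec_smul]
      simp [hv, hq]
      ring
    have e1 : ∑ i, (A.mulVec (x - α • g) i - b i)^2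
        = (∑ i, (u i)^2) - 2*α*(∑ i, u i * p i) + α^2*(∑ i, p i ^ 2) := by
      simp only [hAz]
      rw [show (∑ i, (u i - α * p i)^2)
          = ∑ i, ((u i)^2 - 2*α*(u i * p i) + α^2 * (p i)^2) from
        Finset.sum_congr rfl fun i _ => by ring]
      rw [Finset.sum_add_distrib, Finset.sum_sub_distrib, ← Finset.mul_sum, ← Finset.mul_sum]
    have e2 : ∑ i, (D.mulVec (x - α • g) i - s i + c i)^2
        = (∑ i, (v i)^2) - 2*α*(∑ i, v i * q i) + α^2*(∑ i, q i ^ 2) := by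
      simp only [hDz]
      rw [show (∑ i, (v i - α * q i)^2)
          = ∑ i, ((v i)^2 - 2*α*(v i * q i) + α^2 * (q i)^2) from
        Finset.sum_congr rfl fun i _ => by ring]
      rw [Finset.sum_add_distrib, Finset.sum_sub_distrib, ← Finset.mul_sum, ← Finset.mul_sum]
    have ev : ∀ i, D.mulVec x i - s i + c i = v i := by
      intro i; simp [hv]; ring
    have eu : ∀ i, A.mulVec x i - b i = u i := fun i => rfl
    simp only [fproj, fjoint, ← hsdef, e1, e2, eu, ev]
    linear_combination (-α) * hS
  obtain ⟨i0, hi0⟩ := Function.ne_iff.mp hg0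
  have hGpos : 0 < G := by
    refine Finset.sum_pos' (fun i _ => mul_self_nonneg _)
      ⟨i0, Finset.mem_univ _, mul_self_pos.mpr hi0⟩
  have hCnn : 0 ≤ C := by
    refine add_nonneg (Finset.sum_nonneg fun i _ => sq_nonneg _)
      (mul_nonneg (sq_nonneg lam) (Finset.sum_nonneg fun i _ => sq_nonneg _))
  refine ⟨G / (C + 1), div_pos hGpos (by linarith), ?_⟩
  intro α hα hαb
  have h1 := fproj_le_fjoint A b D c μ lam hμ hlam (x - α • g) s
  rw [hexp α] at h1
  have h2 : α * (C + 1) < G := (lt_div_iff₀ (by linarith)).mp hαb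
  have h3 : α^2/2 * C < α * G := by
    nlinarith [mul_lt_mul_of_pos_left h2 hα, sq_nonneg α, hCnn, hα]
  linarith
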